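/- Let U_0 = { y ∈ [0,∞)^{3K} : Σ_{k=1}^K (y^k + y^{K+k}) ≤ 1 and Σ_{k=1}^K (y^k + y^{2K+k}) ≤ 2 }. Any solution y_t of dy/dt = b(y_t) with y_0 ∈ U_0 satisfies y_t ∈ U_0 for all t ≥ 0. -/

import Mathlib

open Filter

/-- The SIR-SBM ODE system: `ds_k/dt = -η s_k Σ_ℓ x_ℓ W_{ℓk}`,
`di_k/dt = -γ i_k + η s_k Σ_ℓ x_ℓ W_{ℓk}`, `dx_k/dt = -(η+γ) x_k + η s_k Σ_ℓ x_ℓ W_{ℓk}`,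
holding on `[0,∞)`. -/
def sirODE {K : ℕ} (W : Matrix (Fin K) (Fin K) ℝ) (η γ : ℝ)
    (s i x : ℝ → Fin K → ℝ) : Prop :=
  ∀ k : Fin K, ∀ t ∈ Set.Ici (0 : ℝ),
    HasDerivWithinAt (fun τ => s τ k)
      (-η * s t k * ∑ l, x t l * W l k) (Set.Ici 0) t ∧
    HasDerivWithinAt (fun τ => i τ k)
      (-γ * i t k + η * s t k * ∑ l, x t l * W l k) (Set.Ici 0) t ∧
    HasDerivWithinAt (fun τ => x τ k)
      (-(η + γ) * x t k + η * s t k * ∑ l, x t l * W l k) (Set.Ici 0) t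

/-- The set `U₀ = { y ∈ [0,∞)^{3K} : Σ_k (s_k + i_k) ≤ 1, Σ_k (s_k + x_k) ≤ 2 }`. -/
def inU0 {K : ℕ} (s i x : Fin K → ℝ) : Prop :=
  (∀ k, 0 ≤ s k) ∧ (∀ k, 0 ≤ i k) ∧ (∀ k, 0 ≤ x k) ∧
    (∑ k, (s k + i k)) ≤ 1 ∧ (∑ k, (s k + x k)) ≤ 2

open Set in
lemma hasDerivAt_minsq (u : ℝ) :
    HasDerivAt (fun v : ℝ => (min v 0)^2) (2 * min u 0) u := by
  rcases lt_trichotomy u 0 with h | h | h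
  · have h1 : HasDerivAt (fun v : ℝ => v ^ 2) (2 * u) u := by
      simpa using hasDerivAt_pow 2 u
    have : HasDerivAt (fun v : ℝ => (min v 0)^2) (2 * u) u := by
      apply h1.congr_of_eventuallyEq
      filter_upwards [Iio_mem_nhds h] with v hv
      rw [min_eq_left (le_of_lt hv)]
    simpa [min_eq_left h.le] using this
  · subst h
    have : HasDerivAt (fun v : ℝ => (min v 0)^2) 0 0 := by
      rw [hasDerivAt_iff_isLittleO]
      rw [Asymptotics.isLittleO_iff]
      intro c hc
      filter_upwards [Metric.ball_mem_nhds (0:ℝ) hc] with v hv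
      simp only [Metric.mem_ball, Real.dist_eq, sub_zero] at hv
      have h1 : |min v 0| ≤ |v| := abs_min_le_max_abs_abs.trans (by simp)
      have h2 : (min v 0)^2 ≤ |v| * |v| := by
        nlinarith [abs_nonneg (min v 0), abs_nonneg v, sq_abs (min v 0)]
      simp only [sub_zero, smul_eq_mul, mul_zero, min_self]
      rw [Real.norm_eq_abs, Real.norm_eq_abs]
      have h3 : |(min v 0)^2 - 0^2| = (min v 0)^2 := by
        rw [show ((0:ℝ))^2 = 0 by norm_num, sub_zero, abs_of_nonneg (sq_nonneg _)]
      rw [h3]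
      calc (min v 0)^2 ≤ |v| * |v| := h2
        _ ≤ c * |v| := by nlinarith [abs_nonneg v]
    simpa using this
  · have : HasDerivAt (fun v : ℝ => (min v 0)^2) 0 u := by
      apply (hasDerivAt_const u (0:ℝ)).congr_of_eventuallyEq
      filter_upwards [Ioi_mem_nhds h] with v hv
      rw [min_eq_right (le_of_lt hv)]
      norm_num
    simpa [min_eq_right h.le] using this

lemma min_mul_self' (u : ℝ) : min u 0 * u = (min u 0)^2 := by
  rcases le_total u 0 with h | h
  · rw [min_eq_left h]; ring
  · rw [min_eq_right h]; ring

open Set in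
lemma neg_min_le_abs (u : ℝ) : -(min u 0) ≤ |u| := by
  rcases le_total u 0 with h | h
  · rw [min_eq_left h]; exact neg_le_abs u
  · rw [min_eq_right h]; simpa using abs_nonneg u

lemma max_le_abs0 (u : ℝ) : max u 0 ≤ |u| := max_le (le_abs_self u) (abs_nonneg u)

lemma decomp0 (u : ℝ) : u = max u 0 - (-(min u 0)) := by
  have := max_add_min u 0; linarith

open Set in
set_option maxHeartbeats 2000000 in
lemma sir_nonneg {K : ℕ} (W : Matrix (Fin K) (Fin K) ℝ) (hW : ∀ k l, 0 ≤ W k l)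
    (η γ : ℝ) (hη : 0 < η) (hγ : 0 < γ)
    (s i x : ℝ → Fin K → ℝ) (hODE : sirODE W η γ s i x)
    (hs0 : ∀ k, 0 ≤ s 0 k) (hi0 : ∀ k, 0 ≤ i 0 k) (hx0 : ∀ k, 0 ≤ x 0 k) :
    ∀ t ∈ Set.Ici (0:ℝ), (∀ k, 0 ≤ s t k) ∧ (∀ k, 0 ≤ i t k) ∧ (∀ k, 0 ≤ x t k) := by
  intro T hT
  rw [Set.mem_Ici] at hT
  set g : ℝ → ℝ := fun τ =>
    ∑ k, ((min (s τ k) 0)^2 + (min (i τ k) 0)^2 + (min (x τ k) 0)^2) with hg_def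
  set G : ℝ → ℝ := fun τ =>
    ∑ k, (2 * min (s τ k) 0 * (-η * s τ k * ∑ l, x τ l * W l k)
      + 2 * min (i τ k) 0 * (-γ * i τ k + η * s τ k * ∑ l, x τ l * W l k)
      + 2 * min (x τ k) 0 * (-(η + γ) * x τ k + η * s τ k * ∑ l, x τ l * W l k)) with hG_def
  -- derivative of g
  have hg' : ∀ τ ∈ Set.Ici (0:ℝ), HasDerivWithinAt g (G τ) (Set.Ici 0) τ := by
    intro τ hτ
    apply HasDerivWithinAt.fun_sum
    intro k _
    obtain ⟨hds, hdi, hdx⟩ := hODE k τ hτ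
    have h1 := (hasDerivAt_minsq (s τ k)).comp_hasDerivWithinAt τ hds
    have h2 := (hasDerivAt_minsq (i τ k)).comp_hasDerivWithinAt τ hdi
    have h3 := (hasDerivAt_minsq (x τ k)).comp_hasDerivWithinAt τ hdx
    simp only [Function.comp_def] at h1 h2 h3
    exact (h1.add h2).add h3
  -- continuity
  have hcs : ∀ k, ContinuousOn (fun τ => s τ k) (Set.Ici 0) :=
    fun k τ hτ => ((hODE k τ hτ).1).continuousWithinAt
  have hci : ∀ k, ContinuousOn (fun τ => i τ k) (Set.Ici 0) :=
    fun k τ hτ => ((hODE k τ hτ).2.1).continuousWithinAt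
  have hcx : ∀ k, ContinuousOn (fun τ => x τ k) (Set.Ici 0) :=
    fun k τ hτ => ((hODE k τ hτ).2.2).continuousWithinAt
  have hgc : ContinuousOn g (Set.Ici 0) := by
    have hmc : ∀ (f : ℝ → Fin K → ℝ), (∀ k, ContinuousOn (fun τ => f τ k) (Set.Ici 0)) →
        ∀ k, ContinuousOn (fun τ => (min (f τ k) 0)^2) (Set.Ici 0) :=
      fun f hf k τ hτ => ((hf k τ hτ).min continuousWithinAt_const).pow 2
    apply continuousOn_finset_sum
    intro k _
    exact ((hmc s hcs k).add (hmc i hci k)).add (hmc x hcx k)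
    -- uniform bound R on [0,T]
  have hFc : ContinuousOn (fun τ => ((s τ, i τ, x τ) : (Fin K → ℝ) × (Fin K → ℝ) × (Fin K → ℝ)))
      (Set.Icc 0 T) := by
    refine ContinuousOn.prodMk ?_ (ContinuousOn.prodMk ?_ ?_)
    · exact continuousOn_pi.2 fun k => (hcs k).mono Set.Icc_subset_Ici_self
    · exact continuousOn_pi.2 fun k => (hci k).mono Set.Icc_subset_Ici_self
    · exact continuousOn_pi.2 fun k => (hcx k).mono Set.Icc_subset_Ici_self
  obtain ⟨R0, hR0⟩ := isCompact_Icc.exists_bound_of_continuousOn hFc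
  set R : ℝ := max R0 0 with hR_def
  have hR0' : (0:ℝ) ≤ R := le_max_right _ _
  have hRs : ∀ τ ∈ Set.Icc (0:ℝ) T, ∀ k, |s τ k| ≤ R ∧ |i τ k| ≤ R ∧ |x τ k| ≤ R := by
    intro τ hτ k
    have h := (hR0 τ hτ).trans (le_max_left R0 0)
    have h1 : ‖s τ k‖ ≤ ‖((s τ, i τ, x τ) : (Fin K → ℝ) × (Fin K → ℝ) × (Fin K → ℝ))‖ :=
      le_trans (norm_le_pi_norm (s τ) k) (norm_fst_le ((s τ, (i τ, x τ)) : (Fin K → ℝ) × ((Fin K → ℝ) × (Fin K → ℝ))))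
    have h2 : ‖i τ k‖ ≤ ‖((s τ, i τ, x τ) : (Fin K → ℝ) × (Fin K → ℝ) × (Fin K → ℝ))‖ :=
      le_trans (norm_le_pi_norm (i τ) k) (le_trans (norm_fst_le ((i τ, x τ) : (Fin K → ℝ) × (Fin K → ℝ))) (norm_snd_le ((s τ, (i τ, x τ)) : (Fin K → ℝ) × ((Fin K → ℝ) × (Fin K → ℝ)))))
    have h3 : ‖x τ k‖ ≤ ‖((s τ, i τ, x τ) : (Fin K → ℝ) × (Fin K → ℝ) × (Fin K → ℝ))‖ :=
      le_trans (norm_le_pi_norm (x τ) k) (le_trans (norm_snd_le ((i τ, x τ) : (Fin K → ℝ) × (Fin K → ℝ))) (norm_snd_le ((s τ, (i τ, x τ)) : (Fin K → ℝ) × ((Fin K → ℝ) × (Fin K → ℝ)))))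
    rw [Real.norm_eq_abs] at h1 h2 h3
    exact ⟨h1.trans h, h2.trans h, h3.trans h⟩
  -- bound on W
  set Wb : ℝ := ∑ l, ∑ k, W l k with hWb_def
  have hWb0 : (0:ℝ) ≤ Wb := Finset.sum_nonneg fun l _ => Finset.sum_nonneg fun k _ => hW l k
  have hWb : ∀ l k, W l k ≤ Wb := by
    intro l k
    calc W l k ≤ ∑ k', W l k' := Finset.single_le_sum (fun k' _ => hW l k') (Finset.mem_univ k)
      _ ≤ Wb := Finset.single_le_sum (f := fun l' => ∑ k', W l' k')
          (fun l' _ => Finset.sum_nonneg fun k' _ => hW l' k') (Finset.mem_univ l)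
  set C : ℝ := 6 * η * Wb * R * ((K:ℝ)+1)^2 with hC_def
  -- the key differential inequality
  have hbound : ∀ τ ∈ Set.Icc (0:ℝ) T, G τ ≤ C * g τ := by
    intro τ hτ
    set nA : Fin K → ℝ := fun k => -(min (s τ k) 0) with hnA_def
    set nB : Fin K → ℝ := fun k => -(min (i τ k) 0) with hnB_def
    set nC : Fin K → ℝ := fun k => -(min (x τ k) 0) with hnC_def
    set sP : Fin K → ℝ := fun k => max (s τ k) 0 with hsP_def
    set xP : Fin K → ℝ := fun k => max (x τ k) 0 with hxP_def
    set N : ℝ := ∑ k, (nA k + nB k + nC k) with hN_def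
    have hnA0 : ∀ k, 0 ≤ nA k := fun k => neg_nonneg.2 (min_le_right _ _)
    have hnB0 : ∀ k, 0 ≤ nB k := fun k => neg_nonneg.2 (min_le_right _ _)
    have hnC0 : ∀ k, 0 ≤ nC k := fun k => neg_nonneg.2 (min_le_right _ _)
    have hsP0 : ∀ k, 0 ≤ sP k := fun k => le_max_right _ _
    have hxP0 : ∀ k, 0 ≤ xP k := fun k => le_max_right _ _
    have hnAR : ∀ k, nA k ≤ R := fun k => (neg_min_le_abs _).trans (hRs τ hτ k).1
    have hnCR : ∀ k, nC k ≤ R := fun k => (neg_min_le_abs _).trans (hRs τ hτ k).2.2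
    have hsPR : ∀ k, sP k ≤ R := fun k => (max_le_abs0 _).trans (hRs τ hτ k).1
    have hxPR : ∀ k, xP k ≤ R := fun k => (max_le_abs0 _).trans (hRs τ hτ k).2.2
    have hs_decomp : ∀ k, s τ k = sP k - nA k := fun k => decomp0 (s τ k)
    have hx_decomp : ∀ l, x τ l = xP l - nC l := fun l => decomp0 (x τ l)
    have hxge : ∀ l, -(nC l) ≤ x τ l := fun l => by
      have h := min_le_left (x τ l) 0
      simp only [hnC_def, neg_neg]
      exact h
    have hN0 : (0:ℝ) ≤ N :=
      Finset.sum_nonneg fun k _ => add_nonneg (add_nonneg (hnA0 k) (hnB0 k)) (hnC0 k)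
    have hsumC_le : (∑ l, nC l) ≤ N :=
      Finset.sum_le_sum fun l _ => by
        have := hnA0 l; have := hnB0 l; linarith
    have hA_le_N : ∀ k, nA k ≤ N := fun k => by
      have h1 : nA k + nB k + nC k ≤ N :=
        Finset.single_le_sum (f := fun j => nA j + nB j + nC j)
          (fun j _ => add_nonneg (add_nonneg (hnA0 j) (hnB0 j)) (hnC0 j)) (Finset.mem_univ k)
      have := hnB0 k; have := hnC0 k; linarith
    -- lower bound on the interaction sum
    have hSlb : ∀ k, -(Wb * N) ≤ ∑ l, x τ l * W l k := by
      intro k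
      have e1 : ∀ l, -(nC l * Wb) ≤ x τ l * W l k := by
        intro l
        have h2 : -(nC l) * W l k ≤ x τ l * W l k :=
          mul_le_mul_of_nonneg_right (hxge l) (hW l k)
        have h3 : -(nC l * Wb) ≤ -(nC l) * W l k := by
          nlinarith [hnC0 l, hWb l k, hW l k]
        linarith
      calc -(Wb*N) ≤ -(Wb * ∑ l, nC l) := by
            have q := mul_nonneg hWb0 (sub_nonneg.2 hsumC_le); nlinarith [q]
        _ = ∑ l, -(nC l * Wb) := by
            rw [Finset.mul_sum, ← Finset.sum_neg_distrib]
            exact Finset.sum_congr rfl fun l _ => by ring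
        _ ≤ ∑ l, x τ l * W l k := Finset.sum_le_sum fun l _ => e1 l
    -- upper bound on minus the infection pressure
    have hP : ∀ k, -(η * s τ k * ∑ l, x τ l * W l k) ≤ η*Wb*R*(N + (K:ℝ)*nA k) := by
      intro k
      have e1 : ∀ l, -(s τ k * x τ l) * W l k ≤ Wb*R*(nC l + nA k) := by
        intro l
        have d1 : -(s τ k * x τ l) ≤ sP k * nC l + nA k * xP l := by
          rw [hs_decomp k, hx_decomp l]
          nlinarith [mul_nonneg (hsP0 k) (hxP0 l), mul_nonneg (hnA0 k) (hnC0 l)]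
        have d2 : -(s τ k * x τ l) * W l k ≤ (sP k * nC l + nA k * xP l) * W l k :=
          mul_le_mul_of_nonneg_right d1 (hW l k)
        have d3 : (sP k * nC l + nA k * xP l) * W l k ≤ (sP k * nC l + nA k * xP l) * Wb :=
          mul_le_mul_of_nonneg_left (hWb l k)
            (add_nonneg (mul_nonneg (hsP0 k) (hnC0 l)) (mul_nonneg (hnA0 k) (hxP0 l)))
        have d4 : (sP k * nC l + nA k * xP l) * Wb ≤ Wb*R*(nC l + nA k) := by
          nlinarith [hsPR k, hxPR l, hnC0 l, hnA0 k, hWb0,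
            mul_nonneg (mul_nonneg hWb0 (hnC0 l)) (sub_nonneg.2 (hsPR k)),
            mul_nonneg (mul_nonneg hWb0 (hnA0 k)) (sub_nonneg.2 (hxPR l))]
        linarith
      have e2 : -(η * s τ k * ∑ l, x τ l * W l k) = ∑ l, η * (-(s τ k * x τ l) * W l k) := by
        have e3 : ∑ l, η * (-(s τ k * x τ l) * W l k) = ∑ l, -(η * s τ k * (x τ l * W l k)) :=
          Finset.sum_congr rfl fun l _ => by ring
        rw [e3, Finset.sum_neg_distrib, ← Finset.mul_sum]
      calc -(η * s τ k * ∑ l, x τ l * W l k) = ∑ l, η * (-(s τ k * x τ l) * W l k) := e2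
        _ ≤ ∑ l, η * (Wb*R*(nC l + nA k)) :=
            Finset.sum_le_sum fun l _ => mul_le_mul_of_nonneg_left (e1 l) hη.le
        _ = η * (Wb*R*((∑ l, nC l) + (K:ℝ)*nA k)) := by
            rw [← Finset.mul_sum]
            congr 1
            rw [← Finset.mul_sum]
            congr 1
            rw [Finset.sum_add_distrib, Finset.sum_const, Finset.card_univ, Fintype.card_fin,
              nsmul_eq_mul]
        _ ≤ η*Wb*R*(N + (K:ℝ)*nA k) := by
            have q := mul_nonneg (mul_nonneg (mul_nonneg hη.le hWb0) hR0')
              (sub_nonneg.2 hsumC_le)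
            nlinarith [q]
    -- termwise bounds
    have hterm : ∀ k, 2 * min (s τ k) 0 * (-η * s τ k * ∑ l, x τ l * W l k)
        + 2 * min (i τ k) 0 * (-γ * i τ k + η * s τ k * ∑ l, x τ l * W l k)
        + 2 * min (x τ k) 0 * (-(η + γ) * x τ k + η * s τ k * ∑ l, x τ l * W l k)
        ≤ 2*η*Wb*R*((K:ℝ)+1) * ((nA k + nB k + nC k) * N) := by
      intro k
      have hminA : min (s τ k) 0 = -(nA k) := by simp only [hnA_def, neg_neg]
      have hminB : min (i τ k) 0 = -(nB k) := by simp only [hnB_def, neg_neg]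
      have hminC : min (x τ k) 0 = -(nC k) := by simp only [hnC_def, neg_neg]
      -- s-term
      have hTS : 2 * min (s τ k) 0 * (-η * s τ k * ∑ l, x τ l * W l k)
          ≤ 2*η*Wb*R*((K:ℝ)+1) * (nA k * N) := by
        have e := min_mul_self' (s τ k)
        rw [hminA] at e ⊢
        have h1 : 2 * -(nA k) * (-η * s τ k * ∑ l, x τ l * W l k)
            = -(2*η*(nA k)^2) * (∑ l, x τ l * W l k) := by
          linear_combination (-2*η*(∑ l, x τ l * W l k))*e
        rw [h1]
        have h2 : -(2*η*(nA k)^2) * (∑ l, x τ l * W l k) ≤ 2*η*(nA k)^2*(Wb*N) := by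
          have hint := mul_le_mul_of_nonneg_left (hSlb k)
            (mul_nonneg (mul_nonneg (by norm_num : (0:ℝ) ≤ 2) hη.le) (sq_nonneg (nA k)))
          nlinarith [hint]
        have h3 : 2*η*(nA k)^2*(Wb*N) ≤ 2*η*Wb*R*((K:ℝ)+1)*(nA k*N) := by
          have q1 : 0 ≤ (R - nA k)*(2*η*Wb*(nA k)*N) :=
            mul_nonneg (sub_nonneg.2 (hnAR k))
              (mul_nonneg (mul_nonneg (mul_nonneg (by nlinarith [hη.le] : (0:ℝ) ≤ 2*η) hWb0)
                (hnA0 k)) hN0)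
          have q2 : 0 ≤ (K:ℝ)*(2*η*Wb*R*(nA k)*N) :=
            mul_nonneg (Nat.cast_nonneg K)
              (mul_nonneg (mul_nonneg (mul_nonneg (mul_nonneg
                (by nlinarith [hη.le] : (0:ℝ) ≤ 2*η) hWb0) hR0') (hnA0 k)) hN0)
          nlinarith [q1, q2]
        linarith
      -- i-term
      have hTI : 2 * min (i τ k) 0 * (-γ * i τ k + η * s τ k * ∑ l, x τ l * W l k)
          ≤ 2*η*Wb*R*((K:ℝ)+1) * (nB k * N) := by
        have e := min_mul_self' (i τ k)
        rw [hminB] at e ⊢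
        have h1 : 2 * -(nB k) * (-γ * i τ k + η * s τ k * ∑ l, x τ l * W l k)
            = -(2*γ*(nB k)^2) + 2*(nB k)*(-(η * s τ k * ∑ l, x τ l * W l k)) := by
          linear_combination (-2*γ)*e
        rw [h1]
        have h2 : 2*(nB k)*(-(η * s τ k * ∑ l, x τ l * W l k))
            ≤ 2*(nB k)*(η*Wb*R*(N + (K:ℝ)*nA k)) :=
          mul_le_mul_of_nonneg_left (hP k)
            (mul_nonneg (by norm_num : (0:ℝ) ≤ 2) (hnB0 k))
        have h3 : 2*(nB k)*(η*Wb*R*(N + (K:ℝ)*nA k)) ≤ 2*η*Wb*R*((K:ℝ)+1)*(nB k*N) := by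
          have q1 : 0 ≤ ((N - nA k)*((K:ℝ)*(2*η*Wb*R*nB k))) :=
            mul_nonneg (sub_nonneg.2 (hA_le_N k))
              (mul_nonneg (Nat.cast_nonneg K)
                (mul_nonneg (mul_nonneg (mul_nonneg
                  (by nlinarith [hη.le] : (0:ℝ) ≤ 2*η) hWb0) hR0') (hnB0 k)))
          nlinarith [q1]
        nlinarith [h2, h3, mul_nonneg hγ.le (sq_nonneg (nB k))]
      -- x-term
      have hTX : 2 * min (x τ k) 0 * (-(η + γ) * x τ k + η * s τ k * ∑ l, x τ l * W l k)
          ≤ 2*η*Wb*R*((K:ℝ)+1) * (nC k * N) := by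
        have e := min_mul_self' (x τ k)
        rw [hminC] at e ⊢
        have h1 : 2 * -(nC k) * (-(η + γ) * x τ k + η * s τ k * ∑ l, x τ l * W l k)
            = -(2*(η+γ)*(nC k)^2) + 2*(nC k)*(-(η * s τ k * ∑ l, x τ l * W l k)) := by
          linear_combination (-2*(η+γ))*e
        rw [h1]
        have h2 : 2*(nC k)*(-(η * s τ k * ∑ l, x τ l * W l k))
            ≤ 2*(nC k)*(η*Wb*R*(N + (K:ℝ)*nA k)) :=
          mul_le_mul_of_nonneg_left (hP k)
            (mul_nonneg (by norm_num : (0:ℝ) ≤ 2) (hnC0 k))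
        have h3 : 2*(nC k)*(η*Wb*R*(N + (K:ℝ)*nA k)) ≤ 2*η*Wb*R*((K:ℝ)+1)*(nC k*N) := by
          have q1 : 0 ≤ ((N - nA k)*((K:ℝ)*(2*η*Wb*R*nC k))) :=
            mul_nonneg (sub_nonneg.2 (hA_le_N k))
              (mul_nonneg (Nat.cast_nonneg K)
                (mul_nonneg (mul_nonneg (mul_nonneg
                  (by nlinarith [hη.le] : (0:ℝ) ≤ 2*η) hWb0) hR0') (hnC0 k)))
          nlinarith [q1]
        nlinarith [h2, h3, mul_nonneg (add_nonneg hη.le hγ.le) (sq_nonneg (nC k))]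
      calc 2 * min (s τ k) 0 * (-η * s τ k * ∑ l, x τ l * W l k)
          + 2 * min (i τ k) 0 * (-γ * i τ k + η * s τ k * ∑ l, x τ l * W l k)
          + 2 * min (x τ k) 0 * (-(η + γ) * x τ k + η * s τ k * ∑ l, x τ l * W l k)
          ≤ 2*η*Wb*R*((K:ℝ)+1) * (nA k * N) + 2*η*Wb*R*((K:ℝ)+1) * (nB k * N)
            + 2*η*Wb*R*((K:ℝ)+1) * (nC k * N) := add_le_add (add_le_add hTS hTI) hTX
        _ = 2*η*Wb*R*((K:ℝ)+1) * ((nA k + nB k + nC k) * N) := by ring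
    -- Cauchy–Schwarz step
    have hg_nonneg : (0:ℝ) ≤ g τ := by
      rw [hg_def]
      exact Finset.sum_nonneg fun k _ => by positivity
    have hNsq : N^2 ≤ 3*((K:ℝ)+1) * g τ := by
      have h1 : N^2 ≤ (K:ℝ) * ∑ k, (nA k + nB k + nC k)^2 := by
        have := sq_sum_le_card_mul_sum_sq (s := (Finset.univ : Finset (Fin K)))
          (f := fun k => nA k + nB k + nC k)
        simpa [hN_def] using this
      have h2 : ∑ k, (nA k + nB k + nC k)^2 ≤ 3 * g τ := by
        have h3 : ∀ k ∈ (Finset.univ : Finset (Fin K)), (nA k + nB k + nC k)^2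
            ≤ 3*((min (s τ k) 0)^2 + (min (i τ k) 0)^2 + (min (x τ k) 0)^2) := by
          intro k _
          have eA : (min (s τ k) 0)^2 = (nA k)^2 := by
            rw [show min (s τ k) 0 = -(nA k) by simp only [hnA_def, neg_neg]]; ring
          have eB : (min (i τ k) 0)^2 = (nB k)^2 := by
            rw [show min (i τ k) 0 = -(nB k) by simp only [hnB_def, neg_neg]]; ring
          have eC : (min (x τ k) 0)^2 = (nC k)^2 := by
            rw [show min (x τ k) 0 = -(nC k) by simp only [hnC_def, neg_neg]]; ring
          rw [eA, eB, eC]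
          nlinarith [sq_nonneg (nA k - nB k), sq_nonneg (nB k - nC k), sq_nonneg (nA k - nC k)]
        calc ∑ k, (nA k + nB k + nC k)^2
            ≤ ∑ k, 3*((min (s τ k) 0)^2 + (min (i τ k) 0)^2 + (min (x τ k) 0)^2) :=
              Finset.sum_le_sum h3
          _ = 3 * g τ := by rw [hg_def, ← Finset.mul_sum]
      nlinarith [h1, h2, Nat.cast_nonneg (α := ℝ) K, hg_nonneg]
    -- combine
    calc G τ = ∑ k, (2 * min (s τ k) 0 * (-η * s τ k * ∑ l, x τ l * W l k)
          + 2 * min (i τ k) 0 * (-γ * i τ k + η * s τ k * ∑ l, x τ l * W l k)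
          + 2 * min (x τ k) 0 * (-(η + γ) * x τ k + η * s τ k * ∑ l, x τ l * W l k)) := by
          rw [hG_def]
      _ ≤ ∑ k, 2*η*Wb*R*((K:ℝ)+1) * ((nA k + nB k + nC k) * N) :=
          Finset.sum_le_sum fun k _ => hterm k
      _ = 2*η*Wb*R*((K:ℝ)+1) * (N * N) := by
          rw [← Finset.mul_sum, ← Finset.sum_mul]
      _ ≤ C * g τ := by
          have q : (0:ℝ) ≤ 2*η*Wb*R*((K:ℝ)+1) := by positivity
          nlinarith [hNsq, hg_nonneg, q, sq_nonneg N, mul_le_mul_of_nonneg_left hNsq q]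
  -- initial value
  have hg0 : g 0 ≤ 0 := by
    have hz : g 0 = 0 := by
      rw [hg_def]
      apply Finset.sum_eq_zero
      intro k _
      rw [min_eq_right (hs0 k), min_eq_right (hi0 k), min_eq_right (hx0 k)]
      norm_num
    linarith
  -- Grönwall
  have key := le_gronwallBound_of_liminf_deriv_right_le (f := g) (f' := G)
    (δ := 0) (K := C) (ε := 0) (a := 0) (b := T)
    (hgc.mono Set.Icc_subset_Ici_self)
    (fun τ hτ r hr =>
      ((hg' τ (Set.mem_Ici.2 hτ.1)).mono (Set.Ici_subset_Ici.2 hτ.1)).liminf_right_slope_le hr)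
    hg0
    (fun τ hτ => by
      have := hbound τ (Set.Ico_subset_Icc_self hτ)
      linarith)
  have hgT := key T (Set.mem_Icc.2 ⟨hT, le_refl T⟩)
  rw [gronwallBound_ε0_δ0] at hgT
  have hsum0 : ∑ k, ((min (s T k) 0)^2 + (min (i T k) 0)^2 + (min (x T k) 0)^2) = 0 := by
    have hgT_nonneg : (0:ℝ) ≤ g T := by
      rw [hg_def]; exact Finset.sum_nonneg fun k _ => by positivity
    have : g T = 0 := le_antisymm hgT hgT_nonneg
    rw [hg_def] at this
    exact this
  have hall : ∀ k ∈ (Finset.univ : Finset (Fin K)),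
      ((min (s T k) 0)^2 + (min (i T k) 0)^2 + (min (x T k) 0)^2) = 0 :=
    (Finset.sum_eq_zero_iff_of_nonneg (fun k _ => by positivity)).1 hsum0
  refine ⟨fun k => ?_, fun k => ?_, fun k => ?_⟩
  · have h := hall k (Finset.mem_univ k)
    have h1 : (min (s T k) 0)^2 = 0 := by
      nlinarith [sq_nonneg (min (s T k) 0), sq_nonneg (min (i T k) 0), sq_nonneg (min (x T k) 0)]
    exact min_eq_right_iff.1 (pow_eq_zero_iff two_ne_zero |>.1 h1)
  · have h := hall k (Finset.mem_univ k)
    have h1 : (min (i T k) 0)^2 = 0 := by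
      nlinarith [sq_nonneg (min (s T k) 0), sq_nonneg (min (i T k) 0), sq_nonneg (min (x T k) 0)]
    exact min_eq_right_iff.1 (pow_eq_zero_iff two_ne_zero |>.1 h1)
  · have h := hall k (Finset.mem_univ k)
    have h1 : (min (x T k) 0)^2 = 0 := by
      nlinarith [sq_nonneg (min (s T k) 0), sq_nonneg (min (i T k) 0), sq_nonneg (min (x T k) 0)]
    exact min_eq_right_iff.1 (pow_eq_zero_iff two_ne_zero |>.1 h1)

/-- Any solution of the SIR-SBM system starting in `U₀` stays in `U₀` for all `t ≥ 0`. -/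
theorem stmt4 {K : ℕ} (W : Matrix (Fin K) (Fin K) ℝ) (hW : ∀ k l, 0 ≤ W k l)
    (hWsymm : W.IsSymm) (η γ : ℝ) (hη : 0 < η) (hγ : 0 < γ)
    (s i x : ℝ → Fin K → ℝ) (hODE : sirODE W η γ s i x)
    (h0 : inU0 (s 0) (i 0) (x 0)) :
    ∀ t ∈ Set.Ici (0 : ℝ), inU0 (s t) (i t) (x t) := by
  obtain ⟨hs0, hi0, hx0, hsum1, hsum2⟩ := h0
  have hnn := sir_nonneg W hW η γ hη hγ s i x hODE hs0 hi0 hx0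
  have hS1 : AntitoneOn (fun τ => ∑ k, (s τ k + i τ k)) (Set.Ici 0) := by
    apply antitoneOn_of_hasDerivWithinAt_nonpos (convex_Ici 0)
      (f' := fun τ => ∑ k, (-γ * i τ k))
    · apply continuousOn_finset_sum
      intro k _ τ hτ
      exact ((hODE k τ hτ).1.add (hODE k τ hτ).2.1).continuousWithinAt
    · intro τ hτ
      rw [interior_Ici] at hτ ⊢
      have hτ' : τ ∈ Set.Ici (0:ℝ) := Set.mem_Ici.2 (le_of_lt (Set.mem_Ioi.1 hτ))
      have hd : HasDerivWithinAt (fun τ => ∑ k, (s τ k + i τ k)) (∑ k, (-γ * i τ k))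
          (Set.Ici 0) τ := by
        apply HasDerivWithinAt.fun_sum
        intro k _
        have h := (hODE k τ hτ').1.fun_add (hODE k τ hτ').2.1
        convert h using 1
        ring
      exact hd.mono Set.Ioi_subset_Ici_self
    · intro τ hτ
      rw [interior_Ici] at hτ
      apply Finset.sum_nonpos
      intro k _
      have := (hnn τ (Set.mem_Ici.2 (le_of_lt (Set.mem_Ioi.1 hτ)))).2.1 k
      nlinarith [hγ.le]
  have hS2 : AntitoneOn (fun τ => ∑ k, (s τ k + x τ k)) (Set.Ici 0) := by
    apply antitoneOn_of_hasDerivWithinAt_nonpos (convex_Ici 0)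
      (f' := fun τ => ∑ k, (-(η + γ) * x τ k))
    · apply continuousOn_finset_sum
      intro k _ τ hτ
      exact ((hODE k τ hτ).1.add (hODE k τ hτ).2.2).continuousWithinAt
    · intro τ hτ
      rw [interior_Ici] at hτ ⊢
      have hτ' : τ ∈ Set.Ici (0:ℝ) := Set.mem_Ici.2 (le_of_lt (Set.mem_Ioi.1 hτ))
      have hd : HasDerivWithinAt (fun τ => ∑ k, (s τ k + x τ k)) (∑ k, (-(η + γ) * x τ k))
          (Set.Ici 0) τ := by
        apply HasDerivWithinAt.fun_sum
        intro k _
        have h := (hODE k τ hτ').1.fun_add (hODE k τ hτ').2.2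
        convert h using 1
        ring
      exact hd.mono Set.Ioi_subset_Ici_self
    · intro τ hτ
      rw [interior_Ici] at hτ
      apply Finset.sum_nonpos
      intro k _
      have := (hnn τ (Set.mem_Ici.2 (le_of_lt (Set.mem_Ioi.1 hτ)))).2.2 k
      nlinarith [hη.le, hγ.le]
  intro t ht
  refine ⟨(hnn t ht).1, (hnn t ht).2.1, (hnn t ht).2.2, ?_, ?_⟩
  · exact le_trans (hS1 Set.self_mem_Ici ht ht) hsum1
  · exact le_trans (hS2 Set.self_mem_Ici ht ht) hsum2
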